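/- Let n ≥ 1 and a, b : {1,…,n} → ℕ, and for a vector v write |v_{>i}| = Σ_{j>i} v_j and |v| = Σ_j v_j. Then for every integer t: ∏_{i=1}^{n} ( t − |a_{>i}| − |b_{>i}| )_{b_i} = Σ_{p} (−1)^{|p|} ( ∏_{i=1}^{n−1} C(b_i, p_i) · ( |a_{>i}| + |p_{>i}| )^{(p_i)} ) · (t)_{|b| − |p|}, where the sum runs over all p : {1,…,n−1} → ℕ with p_i ≤ b_i for each i, (x)_r = x(x−1)⋯(x−r+1) is the falling factorial, x^{(r)} = x(x+1)⋯(x+r−1) is the rising factorial, and C is the binomial coefficient. -/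

import Mathlib

open Finset

/-- The falling factorial `(x)_r = x(x-1)⋯(x-r+1)` of an integer `x`, with `(x)_0 = 1`. -/
noncomputable def fallInt (x : ℤ) (r : ℕ) : ℤ := (descPochhammer ℤ r).eval x

/-- `|v_{>i}| = Σ_{j > i} v_j`. -/
def gtSum {N : ℕ} (v : Fin N → ℕ) (i : Fin N) : ℕ :=
  ∑ j ∈ Finset.univ.filter (fun j : Fin N => i < j), v j

lemma sum_filter_zero_lt {N : ℕ} (v : Fin (N + 1) → ℕ) :
    ∑ j ∈ Finset.univ.filter (fun j : Fin (N + 1) => 0 < j), v j = ∑ j : Fin N, v j.succ := by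
  rw [Finset.sum_filter, Fin.sum_univ_succ]
  simp [Fin.succ_pos]

lemma sum_filter_succ_lt {N : ℕ} (v : Fin (N + 1) → ℕ) (i : Fin N) :
    ∑ j ∈ Finset.univ.filter (fun j : Fin (N + 1) => i.succ < j), v j
      = ∑ j ∈ Finset.univ.filter (fun j : Fin N => i < j), v j.succ := by
  rw [Finset.sum_filter, Finset.sum_filter, Fin.sum_univ_succ]
  simp [Fin.succ_lt_succ_iff]

lemma gtSum_zero {N : ℕ} (v : Fin (N + 1) → ℕ) : gtSum v 0 = ∑ j : Fin N, v j.succ :=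
  sum_filter_zero_lt v

lemma gtSum_succ {N : ℕ} (v : Fin (N + 1) → ℕ) (i : Fin N) :
    gtSum v i.succ = gtSum (fun j => v j.succ) i :=
  sum_filter_succ_lt v i

lemma gtSum_succ_castSucc {N : ℕ} (v : Fin (N + 2) → ℕ) (i : Fin N) :
    gtSum v i.succ.castSucc = gtSum (fun j => v j.succ) i.castSucc := by
  rw [← Fin.succ_castSucc, gtSum_succ]
lemma fallInt_zero (x : ℤ) : fallInt x 0 = 1 := by simp [fallInt]

lemma fallInt_succ (x : ℤ) (r : ℕ) : fallInt x (r + 1) = fallInt x r * (x - r) := by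
  simp [fallInt, descPochhammer_succ_eval]

lemma key (m s : ℕ) (t : ℤ) : ∀ c : ℕ,
    fallInt (t - s - m) c * fallInt t m
      = ∑ k ∈ Finset.range (c + 1),
          (-1 : ℤ) ^ k * (c.choose k : ℤ) * (s.ascFactorial k : ℤ) * fallInt t (c + m - k) := by
  intro c
  induction c with
  | zero => simp [fallInt_zero]
  | succ c ih =>
    have step : ∀ k ∈ Finset.range (c + 1),
        (-1 : ℤ) ^ k * (c.choose k : ℤ) * (s.ascFactorial k : ℤ) *
            fallInt t (c + m - k) * (t - s - m - c)
          = (-1 : ℤ) ^ k * (c.choose k : ℤ) * (s.ascFactorial k : ℤ) * fallInt t (c + 1 + m - k)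
            - (-1 : ℤ) ^ k * (c.choose k : ℤ) * (s.ascFactorial (k + 1) : ℤ) *
              fallInt t (c + m - k) := by
      intro k hk
      rw [Finset.mem_range] at hk
      have hk' : k ≤ c := Nat.lt_succ_iff.mp hk
      have h1 : c + 1 + m - k = (c + m - k) + 1 := by omega
      have h2 : ((c + m - k : ℕ) : ℤ) = (c : ℤ) + m - k := by
        have : k ≤ c + m := by omega
        push_cast [Nat.cast_sub this]; ring
      rw [h1, fallInt_succ, h2, Nat.ascFactorial_succ]
      push_cast
      ring
    calc fallInt (t - s - m) (c + 1) * fallInt t m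
        = (fallInt (t - s - m) c * fallInt t m) * (t - s - m - c) := by
          rw [fallInt_succ]; ring
      _ = ∑ k ∈ Finset.range (c + 1),
            (-1 : ℤ) ^ k * (c.choose k : ℤ) * (s.ascFactorial k : ℤ) *
              fallInt t (c + m - k) * (t - s - m - c) := by
          rw [ih, Finset.sum_mul]
      _ = ∑ k ∈ Finset.range (c + 1),
            ((-1 : ℤ) ^ k * (c.choose k : ℤ) * (s.ascFactorial k : ℤ) * fallInt t (c + 1 + m - k)
              - (-1 : ℤ) ^ k * (c.choose k : ℤ) * (s.ascFactorial (k + 1) : ℤ) *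
                fallInt t (c + m - k)) := Finset.sum_congr rfl step
      _ = ∑ k ∈ Finset.range (c + 1 + 1),
            (-1 : ℤ) ^ k * ((c + 1).choose k : ℤ) * (s.ascFactorial k : ℤ) *
              fallInt t (c + 1 + m - k) := by
          rw [Finset.sum_sub_distrib]
          rw [Finset.sum_range_succ' (fun k => (-1 : ℤ) ^ k * ((c + 1).choose k : ℤ) *
            (s.ascFactorial k : ℤ) * fallInt t (c + 1 + m - k))]
          rw [Finset.sum_range_succ' (fun k => (-1 : ℤ) ^ k * (c.choose k : ℤ) *
            (s.ascFactorial k : ℤ) * fallInt t (c + 1 + m - k))]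
          have reidx : ∀ k, c + 1 + m - (k + 1) = c + m - k := by omega
          simp only [reidx, Nat.choose_succ_succ, Nat.choose_zero_right]
          have hext : ∑ x ∈ Finset.range (c + 1),
              (-1 : ℤ) ^ (x + 1) * (c.choose (x + 1) : ℤ) * (s.ascFactorial (x + 1) : ℤ) *
                fallInt t (c + m - x)
              = ∑ x ∈ Finset.range c,
              (-1 : ℤ) ^ (x + 1) * (c.choose (x + 1) : ℤ) * (s.ascFactorial (x + 1) : ℤ) *
                fallInt t (c + m - x) := by
            rw [Finset.sum_range_succ]
            simp [Nat.choose_succ_self]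
          rw [← hext, add_sub_right_comm, ← Finset.sum_sub_distrib]
          congr 1
          apply Finset.sum_congr rfl
          intro x _
          push_cast
          ring

/-- The identity obtained by evaluating the normal-form expansion
`∏_{i=1}^n x^{a_i} y^{b_i} = Σ_k N_M(A,k) x^{|a|+k} y^{|b|-k} ℏ^k` in the `M`-Weyl algebra
on `x^t`: for all `a, b : Fin (n+1) → ℕ` and every `t : ℤ`,
`∏_i (t - |a_{>i}| - |b_{>i}|)_{b_i}` equals
`Σ_p (-1)^{|p|} (∏_i C(b_i,p_i) (|a_{>i}| + |p_{>i}|)^{(p_i)}) (t)_{|b|-|p|}`,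
summed over `p` on the first `n` indices with `p_i ≤ b_i`; `x^{(r)}` is the rising
factorial `x(x+1)⋯(x+r-1)`. -/
theorem statement11 (n : ℕ) (a b : Fin (n + 1) → ℕ) (t : ℤ) :
    ∏ i : Fin (n + 1), fallInt (t - (gtSum a i : ℤ) - (gtSum b i : ℤ)) (b i) =
      ∑ p : (i : Fin n) → Fin (b i.castSucc + 1),
        (-1 : ℤ) ^ (∑ i : Fin n, (p i : ℕ)) *
          (∏ i : Fin n,
            ((b i.castSucc).choose (p i) : ℤ) *
              (((gtSum a i.castSucc +
                  ∑ j ∈ Finset.univ.filter (fun j : Fin n => i < j), ((p j : ℕ))).ascFactorial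
                  (p i) : ℕ) : ℤ)) *
          fallInt t ((∑ i : Fin (n + 1), b i) - ∑ i : Fin n, (p i : ℕ)) := by
  induction n with
  | zero =>
    have h0 : ∀ v : Fin 1 → ℕ, gtSum v 0 = 0 := fun v => by rw [gtSum_zero]; simp
    simp [h0]
  | succ n ih =>
    rw [Fin.prod_univ_succ]
    have hprod : (∏ i : Fin (n + 1),
        fallInt (t - (gtSum a i.succ : ℤ) - (gtSum b i.succ : ℤ)) (b i.succ))
        = ∏ i : Fin (n + 1),
            fallInt (t - (gtSum (fun j => a j.succ) i : ℤ) - (gtSum (fun j => b j.succ) i : ℤ))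
              ((fun j => b j.succ) i) :=
      Finset.prod_congr rfl fun i _ => by rw [gtSum_succ a i, gtSum_succ b i]
    rw [hprod, ih (fun j => a j.succ) (fun j => b j.succ), Finset.mul_sum]
    rw [← Equiv.sum_comp (Fin.consEquiv fun i : Fin (n + 1) => Fin (b i.castSucc + 1))]
    rw [Fintype.sum_prod_type]
    rw [Finset.sum_comm]
    apply Finset.sum_congr rfl
    intro p' _
    simp only [Fin.consEquiv_apply]
    have hq : (∑ i : Fin n, (p' i : ℕ)) ≤ gtSum b 0 := by
      rw [gtSum_zero]
      calc (∑ i : Fin n, (p' i : ℕ)) ≤ ∑ i : Fin n, b i.castSucc.succ :=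
            Finset.sum_le_sum fun i _ => Fin.is_le (p' i)
        _ ≤ ∑ j : Fin (n + 1), b j.succ := by
            rw [Fin.sum_univ_castSucc (f := fun j : Fin (n + 1) => b j.succ)]
            exact Nat.le_add_right _ _
    have hB : (∑ i : Fin (n + 1), b i.succ) = gtSum b 0 := (gtSum_zero b).symm
    rw [hB]
    have hts : t - (gtSum a 0 : ℤ) - (gtSum b 0 : ℤ)
        = t - ((gtSum a 0 + ∑ i : Fin n, (p' i : ℕ) : ℕ) : ℤ)
          - ((gtSum b 0 - ∑ i : Fin n, (p' i : ℕ) : ℕ) : ℤ) := by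
      rw [Nat.cast_sub hq]; push_cast; ring
    rw [hts]
    rw [show ∀ F S P G : ℤ, F * (S * P * G) = S * P * (F * G) from fun F S P G => by ring]
    rw [key (gtSum b 0 - ∑ i : Fin n, (p' i : ℕ)) (gtSum a 0 + ∑ i : Fin n, (p' i : ℕ)) t (b 0)]
    rw [Finset.mul_sum]
    rw [← Fin.sum_univ_eq_sum_range]
    apply Finset.sum_congr rfl
    intro x _
    have hx : (x : ℕ) ≤ b 0 := Fin.is_le x
    have hB2 : (∑ i : Fin (n + 1 + 1), b i) = b 0 + gtSum b 0 := by
      rw [Fin.sum_univ_succ, ← gtSum_zero]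
    rw [hB2]
    have harith : b 0 + (gtSum b 0 - ∑ i : Fin n, (p' i : ℕ)) - ↑x
        = b 0 + gtSum b 0 - (↑x + ∑ i : Fin n, (p' i : ℕ)) := by omega
    rw [harith]
    have e0 : ((Fin.cons x p' : (i : Fin (n + 1)) → Fin (b i.castSucc + 1)) 0 : ℕ) = (x : ℕ) := rfl
    have es : ∀ i : Fin n,
        ((Fin.cons x p' : (i : Fin (n + 1)) → Fin (b i.castSucc + 1)) i.succ : ℕ) = (p' i : ℕ) :=
      fun i => rfl
    simp only [e0, es, Fin.sum_univ_succ, Fin.prod_univ_succ, Fin.cons_zero, Fin.cons_succ,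
      Fin.castSucc_zero, sum_filter_zero_lt, sum_filter_succ_lt, ← Fin.succ_castSucc, gtSum_succ]
    ring
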